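/- Let i ≥ 2 and 1 ≤ ℓ ≤ k ≤ i−1, and let x_1,…,x_{i−1}, y_1,…,y_ℓ be independent variables over ℤ. Then Σ_{j=k}^{i} (−1)^{i−j} · e_{i−1,i−j}(y_1,…,y_ℓ, x_{ℓ+1},…,x_{i−1}) · h_{k,j−k}(x_1,…,x_k) = Σ_{j=ℓ}^{i−k+ℓ} (−1)^{i−k+ℓ−j} · e_{i−k+ℓ−1, i−k+ℓ−j}(y_1,…,y_ℓ, x_{k+1},…,x_{i−1}) · h_{ℓ,j−ℓ}(x_1,…,x_ℓ) in ℤ[x_1,…,x_{i−1},y_1,…,y_ℓ]; in particular the left-hand side does not involve the variables x_{ℓ+1},…,x_k. -/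
import Mathlib


open Polynomial Finset

noncomputable section

/-- Elementary symmetric polynomial of degree `j` in the family `v` indexed by the finite set `s`. -/
def esymF {R : Type*} [CommRing R] {α : Type*} [DecidableEq α] (s : Finset α) (v : α → R) (j : ℕ) : R :=
  ∑ S ∈ s.powersetCard j, ∏ m ∈ S, v m

/-- Complete homogeneous symmetric polynomial of degree `j` in the family `v` indexed by the
finite set `s`. -/
def hsymF {R : Type*} [CommRing R] {α : Type*} [DecidableEq α] (s : Finset α) (v : α → R) (j : ℕ) : R :=
  ∑ m ∈ s.sym j, ((m : Multiset α).map v).prod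


section Aux
variable {R : Type*} [CommRing R] {α : Type*} [DecidableEq α]

lemma esymF_eq (s : Finset α) (v : α → R) (j : ℕ) :
    esymF s v j = (s.val.map v).esymm j := (Finset.esymm_map_val v s j).symm

lemma esymm_zero' (M : Multiset R) : M.esymm 0 = 1 := by
  simp [Multiset.esymm]

lemma esymm_cons (r : R) (M : Multiset R) (j : ℕ) :
    (r ::ₘ M).esymm (j + 1) = M.esymm (j + 1) + r * M.esymm j := by
  simp only [Multiset.esymm, Multiset.powersetCard_cons, Multiset.map_add, Multiset.sum_add,
    Multiset.map_map, Function.comp_def, Multiset.prod_cons]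
  rw [Multiset.sum_map_mul_left]

lemma hsymF_zero (t : Finset α) (w : α → R) : hsymF t w 0 = 1 := by
  simp only [hsymF, Finset.sym_zero, Finset.sum_singleton]
  rfl

lemma hsymF_insert (a : α) (t : Finset α) (ha : a ∉ t) (w : α → R) (m : ℕ) :
    hsymF (insert a t) w (m + 1)
      = hsymF t w (m + 1) + w a * hsymF (insert a t) w m := by
  classical
  have hdis : Disjoint (t.sym (m + 1)) (((insert a t).sym m).image (Sym.cons a)) := by
    rw [Finset.disjoint_left]
    rintro u hu hu'
    rw [Finset.mem_image] at hu'
    obtain ⟨u', -, rfl⟩ := hu'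
    exact ha (Finset.mem_sym_iff.1 hu a (Sym.mem_cons_self a u'))
  have hset : (insert a t).sym (m + 1)
      = t.sym (m + 1) ∪ ((insert a t).sym m).image (Sym.cons a) := by
    ext u
    simp only [Finset.mem_union, Finset.mem_image, Finset.mem_sym_iff, Finset.mem_insert]
    constructor
    · intro h
      by_cases hau : a ∈ u
      · refine Or.inr ⟨u.erase a hau, fun b hb => ?_, Sym.cons_erase hau⟩
        have hbu : b ∈ u := by
          have hb' : b ∈ (u : Multiset α).erase a := by
            have := Sym.coe_erase hau
            rw [← this]; exact hb
          exact Multiset.mem_of_mem_erase hb'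
        exact h b hbu
      · exact Or.inl fun b hb => (h b hb).resolve_left fun e => hau (e ▸ hb)
    · rintro (h | ⟨u', hu', rfl⟩)
      · exact fun b hb => Or.inr (h b hb)
      · intro b hb
        rcases Sym.mem_cons.1 hb with rfl | hb'
        · exact Or.inl rfl
        · exact hu' b hb'
  rw [hsymF, hset, Finset.sum_union hdis,
    Finset.sum_image fun u _ u' _ h => (Sym.cons_inj_right a u u').1 h]
  congr 1
  rw [hsymF, Finset.mul_sum]
  refine Finset.sum_congr rfl fun u _ => ?_
  rw [Sym.coe_cons, Multiset.map_cons, Multiset.prod_cons]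

end Aux

section Key
variable {R : Type*} [CommRing R] {α : Type*} [DecidableEq α]

lemma key (M : Multiset R) (a : α) (t : Finset α) (ha : a ∉ t) (w : α → R) (n : ℕ) :
    ∑ j ∈ range (n + 1), (-1 : R) ^ j * (w a ::ₘ M).esymm j * hsymF (insert a t) w (n - j)
      = ∑ j ∈ range (n + 1), (-1 : R) ^ j * M.esymm j * hsymF t w (n - j) := by
  induction n with
  | zero => simp [esymm_zero', hsymF_zero]
  | succ n ih =>
    have h1 : ∑ j ∈ range (n + 1), (-1 : R) ^ j * (w a ::ₘ M).esymm j * hsymF (insert a t) w (n + 1 - j)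
        = ∑ j ∈ range (n + 1), ((-1 : R) ^ j * (w a ::ₘ M).esymm j * hsymF t w (n + 1 - j)
            + w a * ((-1 : R) ^ j * (w a ::ₘ M).esymm j * hsymF (insert a t) w (n - j))) := by
      refine Finset.sum_congr rfl fun j hj => ?_
      have hjn : j ≤ n := Nat.lt_succ_iff.1 (Finset.mem_range.1 hj)
      have e1 : n + 1 - j = (n - j) + 1 := by omega
      rw [e1, hsymF_insert a t ha]
      ring
    rw [Finset.sum_range_succ, h1, Finset.sum_add_distrib, ← Finset.mul_sum, ih]
    have h2 : ∑ j ∈ range (n + 1), (-1 : R) ^ j * (w a ::ₘ M).esymm j * hsymF t w (n + 1 - j)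
          + (-1 : R) ^ (n + 1) * (w a ::ₘ M).esymm (n + 1) * hsymF (insert a t) w (n + 1 - (n + 1))
        = ∑ j ∈ range (n + 2), (-1 : R) ^ j * (w a ::ₘ M).esymm j * hsymF t w (n + 1 - j) := by
      rw [Finset.sum_range_succ (fun j => (-1 : R) ^ j * (w a ::ₘ M).esymm j * hsymF t w (n + 1 - j)) (n + 1)]
      simp only [Nat.sub_self, hsymF_zero, mul_one]
    rw [add_right_comm, h2]
    have h3 : ∑ j ∈ range (n + 2), (-1 : R) ^ j * (w a ::ₘ M).esymm j * hsymF t w (n + 1 - j)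
        = ∑ j ∈ range (n + 2), (-1 : R) ^ j * M.esymm j * hsymF t w (n + 1 - j)
          - w a * ∑ j ∈ range (n + 1), (-1 : R) ^ j * M.esymm j * hsymF t w (n - j) := by
      rw [Finset.sum_range_succ' (fun j => (-1 : R) ^ j * (w a ::ₘ M).esymm j * hsymF t w (n + 1 - j)) (n + 1),
        Finset.sum_range_succ' (fun j => (-1 : R) ^ j * M.esymm j * hsymF t w (n + 1 - j)) (n + 1)]
      have : ∀ j ∈ range (n + 1),
          (-1 : R) ^ (j + 1) * (w a ::ₘ M).esymm (j + 1) * hsymF t w (n + 1 - (j + 1))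
            = (-1 : R) ^ (j + 1) * M.esymm (j + 1) * hsymF t w (n + 1 - (j + 1))
              - w a * ((-1 : R) ^ j * M.esymm j * hsymF t w (n - j)) := by
        intro j hj
        have e1 : n + 1 - (j + 1) = n - j := by omega
        rw [e1, esymm_cons, pow_succ]
        ring
      rw [Finset.sum_congr rfl this, Finset.sum_sub_distrib, ← Finset.mul_sum]
      have e0 : (w a ::ₘ M).esymm 0 = M.esymm 0 := by rw [esymm_zero', esymm_zero']
      rw [e0]
      ring
    rw [h3]
    ring


lemma key_union (M : Multiset R) (u t : Finset α) (hdis : Disjoint u t) (w : α → R) (n : ℕ) :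
    ∑ j ∈ range (n + 1), (-1 : R) ^ j * (u.val.map w + M).esymm j * hsymF (u ∪ t) w (n - j)
      = ∑ j ∈ range (n + 1), (-1 : R) ^ j * M.esymm j * hsymF t w (n - j) := by
  classical
  induction u using Finset.induction_on with
  | empty => simp
  | @insert a u' ha ih =>
    have hd' : Disjoint u' t := (Finset.disjoint_insert_left.1 hdis).2
    have hat : a ∉ t := (Finset.disjoint_insert_left.1 hdis).1
    have hins : a ∉ u' ∪ t := by simp [ha, hat]
    have hval : (insert a u').val.map w + M = w a ::ₘ (u'.val.map w + M) := by
      rw [Finset.insert_val_of_notMem ha, Multiset.map_cons, Multiset.cons_add]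
    have hu : insert a u' ∪ t = insert a (u' ∪ t) := Finset.insert_union a u' t
    rw [hval, hu, key (u'.val.map w + M) a (u' ∪ t) hins w n, ih hd']


end Key

lemma Ioc_val_add (a b c : ℕ) (h1 : a ≤ b) (h2 : b ≤ c) :
    (Ioc a c).val = (Ioc a b).val + (Ioc b c).val := by
  have hd : Disjoint (Ioc a b) (Ioc b c) := by
    rw [Finset.disjoint_left]
    intro m hm hm'
    rw [Finset.mem_Ioc] at hm hm'
    omega
  rw [← Finset.Ioc_union_Ioc_eq_Ioc h1 h2, ← Finset.disjUnion_eq_union _ _ hd]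
  rfl


/-- For `i ≥ 2` and `1 ≤ ℓ ≤ k ≤ i−1`,
`Σ_{j=k}^{i} (−1)^{i−j} e_{i−1,i−j}(y_1,…,y_ℓ,x_{ℓ+1},…,x_{i−1}) · h_{k,j−k}(x_1,…,x_k)`
equals
`Σ_{j=ℓ}^{i−k+ℓ} (−1)^{i−k+ℓ−j} e_{i−k+ℓ−1,i−k+ℓ−j}(y_1,…,y_ℓ,x_{k+1},…,x_{i−1}) · h_{ℓ,j−ℓ}(x_1,…,x_ℓ)`.
(Stated for arbitrary elements of an arbitrary commutative ring, equivalent to the identity in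
`ℤ[x_1,…,x_{i−1},y_1,…,y_ℓ]`; `x n` denotes `x_n` and `y n` denotes `y_n`.  The argument list
`(y_1,…,y_ℓ,x_{ℓ+1},…,x_{i−1})` is encoded by the function `m ↦ if m ≤ ℓ then y m else x m` on
`{1,…,i−1}`, and `(y_1,…,y_ℓ,x_{k+1},…,x_{i−1})` by `m ↦ if m ≤ ℓ then y m else x (m+(k−ℓ))` on
`{1,…,i−k+ℓ−1}`.) -/
theorem stmt15 {R : Type*} [CommRing R] (i k ℓ : ℕ) (hi : 2 ≤ i) (hℓ : 1 ≤ ℓ) (hℓk : ℓ ≤ k)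
    (hk : k ≤ i - 1) (x y : ℕ → R) :
    ∑ j ∈ Icc k i,
        (-1 : R) ^ (i - j)
          * esymF (Icc 1 (i - 1)) (fun m => if m ≤ ℓ then y m else x m) (i - j)
          * hsymF (Icc 1 k) x (j - k)
      = ∑ j ∈ Icc ℓ (i - k + ℓ),
          (-1 : R) ^ (i - k + ℓ - j)
            * esymF (Icc 1 (i - k + ℓ - 1))
                (fun m => if m ≤ ℓ then y m else x (m + (k - ℓ))) (i - k + ℓ - j)
            * hsymF (Icc 1 ℓ) x (j - ℓ) := by
  classical
  set n := i - k with hn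
  have hki : k < i := by omega
  have hn1 : 1 ≤ n := by omega
  set v : ℕ → R := fun m => if m ≤ ℓ then y m else x m with hv
  set v' : ℕ → R := fun m => if m ≤ ℓ then y m else x (m + (k - ℓ)) with hv'
  set M : Multiset R := (Icc 1 ℓ).val.map y + (Ioc k (i - 1)).val.map x with hM
  -- interval basics
  have hIcc : ∀ m : ℕ, Icc 1 m = Ioc 0 m := fun m => Finset.Icc_add_one_left_eq_Ioc 0 m
  -- LHS to range form
  have hL : ∑ j ∈ Icc k i,
        (-1 : R) ^ (i - j) * esymF (Icc 1 (i - 1)) v (i - j) * hsymF (Icc 1 k) x (j - k)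
      = ∑ j ∈ range (n + 1),
          (-1 : R) ^ j * esymF (Icc 1 (i - 1)) v j * hsymF (Icc 1 k) x (n - j) := by
    rw [← Finset.Ico_add_one_right_eq_Icc, Finset.sum_Ico_eq_sum_range]
    have hc : i + 1 - k = n + 1 := by omega
    rw [hc]
    calc ∑ j ∈ range (n + 1),
          (-1 : R) ^ (i - (k + j)) * esymF (Icc 1 (i - 1)) v (i - (k + j))
            * hsymF (Icc 1 k) x (k + j - k)
        = ∑ j ∈ range (n + 1),
            (fun j' => (-1 : R) ^ j' * esymF (Icc 1 (i - 1)) v j' * hsymF (Icc 1 k) x (n - j'))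
              (n - j) := by
          refine Finset.sum_congr rfl fun j hj => ?_
          have hjn : j ≤ n := by have := Finset.mem_range.1 hj; omega
          have e1 : i - (k + j) = n - j := by omega
          have e2 : k + j - k = j := by omega
          have e3 : n - (n - j) = j := by omega
          simp only [e1, e2, e3]
      _ = _ := by
          have := Finset.sum_range_reflect
            (fun j' => (-1 : R) ^ j' * esymF (Icc 1 (i - 1)) v j' * hsymF (Icc 1 k) x (n - j'))
            (n + 1)
          simpa using this
  -- RHS to range form
  have hR : ∑ j ∈ Icc ℓ (i - k + ℓ),
        (-1 : R) ^ (i - k + ℓ - j) * esymF (Icc 1 (i - k + ℓ - 1)) v' (i - k + ℓ - j)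
          * hsymF (Icc 1 ℓ) x (j - ℓ)
      = ∑ j ∈ range (n + 1),
          (-1 : R) ^ j * esymF (Icc 1 (i - k + ℓ - 1)) v' j * hsymF (Icc 1 ℓ) x (n - j) := by
    rw [← Finset.Ico_add_one_right_eq_Icc, Finset.sum_Ico_eq_sum_range]
    have hc : i - k + ℓ + 1 - ℓ = n + 1 := by omega
    rw [hc]
    calc ∑ j ∈ range (n + 1),
          (-1 : R) ^ (i - k + ℓ - (ℓ + j)) * esymF (Icc 1 (i - k + ℓ - 1)) v' (i - k + ℓ - (ℓ + j))
            * hsymF (Icc 1 ℓ) x (ℓ + j - ℓ)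
        = ∑ j ∈ range (n + 1),
            (fun j' => (-1 : R) ^ j' * esymF (Icc 1 (i - k + ℓ - 1)) v' j'
              * hsymF (Icc 1 ℓ) x (n - j')) (n - j) := by
          refine Finset.sum_congr rfl fun j hj => ?_
          have hjn : j ≤ n := by have := Finset.mem_range.1 hj; omega
          have e1 : i - k + ℓ - (ℓ + j) = n - j := by omega
          have e2 : ℓ + j - ℓ = j := by omega
          have e3 : n - (n - j) = j := by omega
          simp only [e1, e2, e3]
      _ = _ := by
          have := Finset.sum_range_reflect
            (fun j' => (-1 : R) ^ j' * esymF (Icc 1 (i - k + ℓ - 1)) v' j'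
              * hsymF (Icc 1 ℓ) x (n - j')) (n + 1)
          simpa using this
  rw [hL, hR]
  -- multiset decompositions
  have B1 : (Icc 1 (i - 1)).val.map v = (Ioc ℓ k).val.map x + M := by
    rw [hIcc, Ioc_val_add 0 ℓ (i - 1) (by omega) (by omega),
      Ioc_val_add ℓ k (i - 1) hℓk hk, Multiset.map_add, Multiset.map_add]
    have p1 : (Ioc 0 ℓ).val.map v = (Ioc 0 ℓ).val.map y := by
      refine Multiset.map_congr rfl fun m hm => ?_
      rw [Finset.mem_val, Finset.mem_Ioc] at hm
      simp only [hv, if_pos hm.2]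
    have p2 : (Ioc ℓ k).val.map v = (Ioc ℓ k).val.map x := by
      refine Multiset.map_congr rfl fun m hm => ?_
      rw [Finset.mem_val, Finset.mem_Ioc] at hm
      simp only [hv, if_neg (by omega : ¬ m ≤ ℓ)]
    have p3 : (Ioc k (i - 1)).val.map v = (Ioc k (i - 1)).val.map x := by
      refine Multiset.map_congr rfl fun m hm => ?_
      rw [Finset.mem_val, Finset.mem_Ioc] at hm
      simp only [hv, if_neg (by omega : ¬ m ≤ ℓ)]
    rw [p1, p2, p3, hM, hIcc]
    abel
  have B2 : (Icc 1 (i - k + ℓ - 1)).val.map v' = M := by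
    rw [hIcc, Ioc_val_add 0 ℓ (i - k + ℓ - 1) (by omega) (by omega), Multiset.map_add]
    have p1 : (Ioc 0 ℓ).val.map v' = (Ioc 0 ℓ).val.map y := by
      refine Multiset.map_congr rfl fun m hm => ?_
      rw [Finset.mem_val, Finset.mem_Ioc] at hm
      simp only [hv', if_pos hm.2]
    have p2 : (Ioc ℓ (i - k + ℓ - 1)).val.map v' = (Ioc k (i - 1)).val.map x := by
      have hmap : (Ioc ℓ (i - k + ℓ - 1)).map (addRightEmbedding (k - ℓ)) = Ioc k (i - 1) := by
        rw [Finset.map_add_right_Ioc]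
        congr 1 <;> omega
      calc (Ioc ℓ (i - k + ℓ - 1)).val.map v'
          = ((Ioc ℓ (i - k + ℓ - 1)).map (addRightEmbedding (k - ℓ))).val.map x := by
            rw [Finset.map_val, Multiset.map_map]
            refine Multiset.map_congr rfl fun m hm => ?_
            rw [Finset.mem_val, Finset.mem_Ioc] at hm
            simp only [hv', Function.comp_apply, addRightEmbedding_apply,
              if_neg (by omega : ¬ m ≤ ℓ)]
        _ = (Ioc k (i - 1)).val.map x := by rw [hmap]
    rw [p1, p2, hM, hIcc]
  have B3 : Icc 1 k = Ioc ℓ k ∪ Icc 1 ℓ := by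
    rw [hIcc, hIcc, ← Finset.Ioc_union_Ioc_eq_Ioc (Nat.zero_le ℓ) hℓk, Finset.union_comm]
  have hdis : Disjoint (Ioc ℓ k) (Icc 1 ℓ) := by
    rw [Finset.disjoint_left]
    intro m hm hm'
    rw [Finset.mem_Ioc] at hm
    rw [Finset.mem_Icc] at hm'
    omega
  simp only [esymF_eq, B1, B2, B3]
  exact key_union M (Ioc ℓ k) (Icc 1 ℓ) hdis x n

end
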